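/- arXiv:1504.05472 — 8 statements merged into one kernel-verified Lean document; each statement's English description precedes it below -/
import Mathlib

section
/- For any real numbers η > -1, p ∈ [-1,1], and τ > 0, the function q₀(τ) = cos(τ)·cos(τηp) − p·sin(τ)·sin(τηp) and its derivative ∂q₀/∂τ(τ) = −(1+ηp²)·sin(τ)·cos(τηp) − p(η+1)·cos(τ)·sin(τηp) cannot both vanish; i.e., q₀ has no multiple zeros in τ. -/
open Real
noncomputable def q0 (η p τ : ℝ) : ℝ := Real.cos τ * Real.cos (τ*η*p) - p * Real.sin τ * Real.sin (τ*η*p)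
noncomputable def q3 (η p τ : ℝ) : ℝ := Real.cos τ * Real.sin (τ*η*p) + p * Real.sin τ * Real.cos (τ*η*p)

theorem stmt0 (η p τ : ℝ) (hη : η > -1) (hp : p ∈ Set.Icc (-1:ℝ) 1) (hτ : τ > 0) :
    ¬ (q0 η p τ = 0 ∧
       -(1 + η*p^2) * Real.sin τ * Real.cos (τ*η*p) - p*(η+1) * Real.cos τ * Real.sin (τ*η*p) = 0) := by
  rintro ⟨h1, h2⟩
  obtain ⟨hpl, hpu⟩ := hp
  set a := Real.cos τ with ha
  set b := Real.sin τ with hb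
  set c := Real.cos (τ*η*p) with hc
  set s := Real.sin (τ*η*p) with hs
  have hab : b^2 + a^2 = 1 := Real.sin_sq_add_cos_sq τ
  have hsc : s^2 + c^2 = 1 := Real.sin_sq_add_cos_sq (τ*η*p)
  have h1' : a * c - p * b * s = 0 := h1
  have hp2 : p^2 ≤ 1 := by nlinarith
  have hpos2 : η + 1 > 0 := by linarith
  have hpos1 : 1 + η * p^2 > 0 := by
    rcases eq_or_ne p 0 with h | h
    · simp [h]
    · have hpp : p^2 > 0 := by positivity
      nlinarith [mul_pos hpos2 hpp]
  have hkey : p * s * ((η+1) * a^2 + (1 + η*p^2) * b^2) = 0 := by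
    linear_combination (-a) * h2 - (1 + η*p^2) * b * h1'
  have hfac : (η+1) * a^2 + (1 + η*p^2) * b^2 > 0 := by
    rcases le_total (η+1) (1+η*p^2) with h | h
    · nlinarith [mul_nonneg (sub_nonneg.mpr h) (sq_nonneg b)]
    · nlinarith [mul_nonneg (sub_nonneg.mpr h) (sq_nonneg a)]
  have hps : p * s = 0 := by
    rcases mul_eq_zero.mp hkey with h | h
    · exact h
    · linarith
  have hs0 : s = 0 := by
    rcases mul_eq_zero.mp hps with h | h
    · simp [hs, h]
    · exact h
  have hc2 : c^2 = 1 := by nlinarith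
  have ha0 : a = 0 := by
    have hac : a * c = 0 := by linear_combination h1' + (p*b) * hs0
    rcases mul_eq_zero.mp hac with h | h
    · exact h
    · rw [h] at hc2; norm_num at hc2
  have hb0 : b = 0 := by
    have hbc : (1 + η*p^2) * (b * c) = 0 := by
      linear_combination (-1) * h2 - p*(η+1)*a * hs0
    have hbc' : b * c = 0 := by
      rcases mul_eq_zero.mp hbc with h | h
      · linarith
      · exact h
    rcases mul_eq_zero.mp hbc' with h | h
    · exact h
    · rw [h] at hc2; norm_num at hc2
  rw [ha0, hb0] at hab
  norm_num at hab
end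

section
/- For any real numbers η > -1, p ∈ [-1,1] with p ≠ 0, and τ > 0, the function q₃(τ) = cos(τ)·sin(τηp) + p·sin(τ)·cos(τηp) and its derivative ∂q₃/∂τ(τ) = −(1+ηp²)·sin(τ)·sin(τηp) + p(η+1)·cos(τ)·cos(τηp) cannot both vanish; i.e., q₃ has no multiple zeros in τ. -/
open Real
theorem stmt1 (η p τ : ℝ) (hη : η > -1) (hp : p ∈ Set.Icc (-1:ℝ) 1) (hp0 : p ≠ 0) (hτ : τ > 0) :
    ¬ (q3 η p τ = 0 ∧
       -(1 + η*p^2) * Real.sin τ * Real.sin (τ*η*p) + p*(η+1) * Real.cos τ * Real.cos (τ*η*p) = 0) := by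
  rintro ⟨h1, h2⟩
  simp only [q3] at h1
  obtain ⟨hpl, hpr⟩ := hp
  have hp2 : 0 < p^2 := by positivity
  have hp2le : p^2 ≤ 1 := by nlinarith
  have hA : 0 < 1 + η*p^2 := by nlinarith
  have hθ := Real.sin_sq_add_cos_sq (τ*η*p)
  have hτ2 := Real.sin_sq_add_cos_sq τ
  have key : Real.sin τ * Real.cos τ *
      ((1+η*p^2)*(Real.sin (τ*η*p))^2 + p^2*(η+1)*(Real.cos (τ*η*p))^2) = 0 := by
    linear_combination (1+η*p^2)*Real.sin τ*Real.sin (τ*η*p) * h1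
      + p*Real.cos (τ*η*p)*Real.sin τ * h2
  have hB : 0 < (1+η*p^2)*(Real.sin (τ*η*p))^2 + p^2*(η+1)*(Real.cos (τ*η*p))^2 := by
    nlinarith [sq_nonneg (Real.sin (τ*η*p)), sq_nonneg (Real.cos (τ*η*p))]
  have hsc : Real.sin τ * Real.cos τ = 0 := by
    rcases mul_eq_zero.mp key with h | h
    · exact h
    · exact absurd h (ne_of_gt hB)
  rcases mul_eq_zero.mp hsc with hs | hc
  · -- sin τ = 0
    have hc2 : (Real.cos τ)^2 = 1 := by linear_combination hτ2 - Real.sin τ * hs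
    have hcsθ : Real.cos τ * Real.sin (τ*η*p) = 0 := by
      linear_combination h1 - p * Real.cos (τ*η*p) * hs
    have hsθ : Real.sin (τ*η*p) = 0 := by
      linear_combination Real.cos τ * hcsθ - Real.sin (τ*η*p) * hc2
    have hcθ2 : (Real.cos (τ*η*p))^2 = 1 := by
      linear_combination hθ - Real.sin (τ*η*p) * hsθ
    have he : p*(η+1)*Real.cos τ*Real.cos (τ*η*p) = 0 := by
      linear_combination h2 + (1+η*p^2)*Real.sin (τ*η*p)*hs
    have hfin : p^2*(η+1)^2 = 0 := by
      linear_combination p*(η+1)*Real.cos τ*Real.cos (τ*η*p)*he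
        - p^2*(η+1)^2*(Real.cos τ)^2 * hcθ2 - p^2*(η+1)^2*hc2
    nlinarith [mul_pos hp2 (pow_pos (by linarith : (0:ℝ) < η+1) 2)]
  · -- cos τ = 0
    have hs2 : (Real.sin τ)^2 = 1 := by linear_combination hτ2 - Real.cos τ * hc
    have hpsc : p * Real.sin τ * Real.cos (τ*η*p) = 0 := by
      linear_combination h1 - Real.sin (τ*η*p) * hc
    have hp2c : p^2 * Real.cos (τ*η*p) = 0 := by
      linear_combination p*Real.sin τ*hpsc - p^2*Real.cos (τ*η*p)*hs2
    have hcθ : Real.cos (τ*η*p) = 0 :=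
      (mul_eq_zero.mp hp2c).resolve_left (ne_of_gt hp2)
    have hsθ2 : (Real.sin (τ*η*p))^2 = 1 := by
      linear_combination hθ - Real.cos (τ*η*p) * hcθ
    have he2 : (1+η*p^2)*Real.sin τ*Real.sin (τ*η*p) = 0 := by
      linear_combination -h2 + p*(η+1)*Real.cos (τ*η*p)*hc
    have hfin : (1+η*p^2)^2 = 0 := by
      linear_combination (1+η*p^2)*Real.sin τ*Real.sin (τ*η*p)*he2
        - (1+η*p^2)^2*(Real.sin τ)^2*hsθ2 - (1+η*p^2)^2*hs2
    exact absurd hfin (ne_of_gt (pow_pos hA 2))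
end

section
/- If η ≥ -1/2 (and η > -1), then for every p ∈ [-1,1] the function q₀(τ) = cos(τ)cos(τηp) − p·sin(τ)sin(τηp) has a zero in the interval (0, π]. -/
open Real
lemma q0_cont (η p : ℝ) : Continuous (q0 η p) := by
  unfold q0; fun_prop

lemma q0_zero (η p : ℝ) : q0 η p 0 = 1 := by simp [q0]

lemma q0_neg (η p τ : ℝ) : q0 η (-p) τ = q0 η p τ := by
  simp [q0, mul_neg, Real.cos_neg, Real.sin_neg]

lemma ivt (η p T : ℝ) (hT0 : 0 < T) (hTπ : T ≤ Real.pi) (h : q0 η p T ≤ 0) :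
    ∃ τ ∈ Set.Ioc (0:ℝ) Real.pi, q0 η p τ = 0 := by
  have h0 : (0:ℝ) ∈ Set.Icc (q0 η p T) (q0 η p 0) := by
    rw [q0_zero]; exact ⟨h, zero_le_one⟩
  obtain ⟨c, hc, hc0⟩ := intermediate_value_Icc' hT0.le (q0_cont η p).continuousOn h0
  refine ⟨c, ⟨?_, hc.2.trans hTπ⟩, hc0⟩
  rcases hc.1.lt_or_eq with h' | h'
  · exact h'
  · exfalso; rw [← h', q0_zero] at hc0; norm_num at hc0

lemma case_pos (η p : ℝ) (hη2 : η ≥ -1/2) (hpl : -1 ≤ p) (hpu : p ≤ 1)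
    (hb : 1/2 < η * p) :
    ∃ τ ∈ Set.Ioc (0:ℝ) Real.pi, q0 η p τ = 0 := by
  have hppos : 0 < p := by
    by_contra h
    push_neg at h
    nlinarith [mul_nonneg (by linarith : (0:ℝ) ≤ η + 1/2) (by linarith : (0:ℝ) ≤ -p)]
  set t := Real.pi / (1 + η * p) with ht
  have hden : (0:ℝ) < 1 + η * p := by linarith
  have ht0 : 0 < t := div_pos Real.pi_pos hden
  have htπ : t ≤ Real.pi := by
    rw [ht, div_le_iff₀ hden]
    nlinarith [Real.pi_pos]
  apply ivt η p t ht0 htπ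
  have hsum : t + t * (η * p) = Real.pi := by
    rw [ht, ← mul_one_add, div_mul_cancel₀ _ hden.ne']
  have hA : Real.cos (t + t * (η * p)) = -1 := by rw [hsum, Real.cos_pi]
  have h1 := Real.cos_add t (t * (η * p))
  have h2 := Real.cos_sub t (t * (η * p))
  have h3 := Real.cos_le_one (t - t * (η * p))
  unfold q0
  rw [mul_assoc t η p]
  nlinarith [mul_nonneg (by linarith : (0:ℝ) ≤ 1 - p)
    (by linarith : (0:ℝ) ≤ 1 - Real.cos (t - t * (η * p)))]

theorem stmt3 (η p : ℝ) (hη : η > -1) (hη2 : η ≥ -1/2) (hp : p ∈ Set.Icc (-1:ℝ) 1) :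
    ∃ τ ∈ Set.Ioc (0:ℝ) Real.pi, q0 η p τ = 0 := by
  obtain ⟨hpl, hpu⟩ := hp
  rcases le_or_gt (η * p) (1/2) with h1 | h1
  · rcases le_or_gt (-(1/2)) (η * p) with h2 | h2
    · -- |η p| ≤ 1/2 : use τ = π
      apply ivt η p Real.pi Real.pi_pos le_rfl
      have hq : q0 η p Real.pi = -Real.cos (Real.pi * η * p) := by
        simp [q0]
      rw [hq, neg_nonpos]
      apply Real.cos_nonneg_of_mem_Icc
      constructor
      · rw [mul_assoc]
        nlinarith [mul_nonneg Real.pi_pos.le (by linarith : (0:ℝ) ≤ η * p + 1/2)]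
      · rw [mul_assoc]
        nlinarith [mul_nonneg Real.pi_pos.le (by linarith : (0:ℝ) ≤ 1/2 - η * p)]
    · -- η p < -1/2 : symmetry p ↦ -p
      have hb' : 1/2 < η * (-p) := by linarith
      obtain ⟨τ, hτ, h0⟩ := case_pos η (-p) hη2 (by linarith) (by linarith) hb'
      rw [q0_neg] at h0
      exact ⟨τ, hτ, h0⟩
  · exact case_pos η p hη2 hpl hpu h1
end

section
/- If -1 < η < -1/2 and 1/(2|η|) ≤ |p| ≤ 1, then the smallest positive zero of q₀(τ) = cos(τ)cos(τηp) − p·sin(τ)sin(τηp) is at least π. -/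
open Real
lemma q0_eq (η p τ : ℝ) : q0 η p τ
    = Real.cos τ * Real.cos ((-η*|p|)*τ) + |p| * Real.sin τ * Real.sin ((-η*|p|)*τ) := by
  rcases le_or_gt 0 p with hp | hp
  · rw [q0, abs_of_nonneg hp, show τ*η*p = -((-η*p)*τ) by ring, Real.cos_neg, Real.sin_neg]
    ring
  · rw [q0, abs_of_neg hp, show τ*η*p = (-η*(-p))*τ by ring]
    ring

lemma key_ident (c s τ : ℝ) :
    Real.cos τ * Real.cos ((c+1/2)*τ) + s * Real.sin τ * Real.sin ((c+1/2)*τ)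
    = Real.cos (c*τ) * Real.cos (τ/2) * (s + (1-s)*Real.cos τ)
      + Real.sin (c*τ) * Real.sin (τ/2) * (s - (1-s)*Real.cos τ) := by
  have hpy : Real.sin (τ/2)^2 + Real.cos (τ/2)^2 = 1 := Real.sin_sq_add_cos_sq _
  have hcos : Real.cos τ = Real.cos (τ/2)^2 - Real.sin (τ/2)^2 := by
    rw [show τ = 2*(τ/2) by ring, Real.cos_two_mul']
    ring
  have hsin : Real.sin τ = 2 * Real.sin (τ/2) * Real.cos (τ/2) := by
    rw [show τ = 2*(τ/2) by ring, Real.sin_two_mul]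
    ring
  have hbc : (c+1/2)*τ = c*τ + τ/2 := by ring
  rw [hbc, Real.cos_add, Real.sin_add, hcos, hsin]
  linear_combination (s * Real.cos (c*τ) * Real.cos (τ/2)
    + s * Real.sin (c*τ) * Real.sin (τ/2)) * hpy

lemma q0_pos (b s τ : ℝ) (hs1 : 1/2 < s) (hs2 : s ≤ 1) (hb1 : 1/2 ≤ b) (hb2 : b < 1)
    (hτ : 0 < τ) (hτπ : τ < Real.pi) :
    0 < Real.cos τ * Real.cos (b*τ) + s * Real.sin τ * Real.sin (b*τ) := by
  obtain ⟨c, hc⟩ : ∃ c, c = b - 1/2 := ⟨_, rfl⟩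
  have hc0 : 0 ≤ c := by rw [hc]; linarith
  have hc1 : c < 1/2 := by rw [hc]; linarith
  have hcτ0 : 0 ≤ c * τ := mul_nonneg hc0 hτ.le
  have hcτ1 : c * τ < Real.pi / 2 := by
    calc c * τ ≤ c * Real.pi := mul_le_mul_of_nonneg_left hτπ.le hc0
    _ < Real.pi / 2 := by nlinarith [Real.pi_pos]
  have hcosc : 0 < Real.cos (c*τ) :=
    Real.cos_pos_of_mem_Ioo ⟨by nlinarith [Real.pi_pos], hcτ1⟩
  have hsinc : 0 ≤ Real.sin (c*τ) :=
    Real.sin_nonneg_of_nonneg_of_le_pi hcτ0 (by linarith [Real.pi_pos])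
  have hcosh : 0 < Real.cos (τ/2) :=
    Real.cos_pos_of_mem_Ioo ⟨by nlinarith [Real.pi_pos], by linarith⟩
  have hsinh : 0 < Real.sin (τ/2) :=
    Real.sin_pos_of_pos_of_lt_pi (by linarith) (by linarith [Real.pi_pos])
  have hcb1 : Real.cos τ ≤ 1 := Real.cos_le_one τ
  have hcb2 : -1 ≤ Real.cos τ := Real.neg_one_le_cos τ
  have h1 : 0 < s + (1-s)*Real.cos τ := by nlinarith
  have h2 : 0 < s - (1-s)*Real.cos τ := by nlinarith
  have hb' : b = c + 1/2 := by rw [hc]; ring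
  rw [hb', key_ident]
  have hA : 0 < Real.cos (c*τ) * Real.cos (τ/2) * (s + (1-s)*Real.cos τ) := by positivity
  have hB : 0 ≤ Real.sin (c*τ) * Real.sin (τ/2) * (s - (1-s)*Real.cos τ) := by positivity
  linarith

theorem stmt4 (η p τ₀ : ℝ) (hη : -1 < η) (hη2 : η < -1/2)
    (hp1 : 1/(2*|η|) ≤ |p|) (hp2 : |p| ≤ 1)
    (h : IsLeast {τ : ℝ | 0 < τ ∧ q0 η p τ = 0} τ₀) :
    Real.pi ≤ τ₀ := by
  obtain ⟨⟨hτ₀pos, hτ₀zero⟩, -⟩ := h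
  by_contra hcon
  push_neg at hcon
  have hηneg : η < 0 := by linarith
  have hηabs : |η| = -η := abs_of_neg hηneg
  have hη1 : -η < 1 := by linarith
  have hη2' : 1/2 < -η := by linarith
  have hs1 : 1/2 < |p| := by
    have h2η : 0 < 2 * |η| := by rw [hηabs]; linarith
    have : 1/2 < 1/(2*|η|) := by
      rw [div_lt_div_iff₀ (by norm_num) h2η, hηabs]
      linarith
    linarith
  have hb1 : 1/2 ≤ -η * |p| := by
    have h2η : 0 < 2 * |η| := by rw [hηabs]; linarith
    have := (div_le_iff₀ h2η).mp hp1
    rw [hηabs] at this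
    nlinarith
  have hb2 : -η * |p| < 1 := by nlinarith
  have hpos := q0_pos (-η*|p|) |p| τ₀ hs1 hp2 hb1 hb2 hτ₀pos hcon
  rw [q0_eq] at hτ₀zero
  linarith
end

section
/- If -1 < η < -1/2 and |p| < 1/(2|η|), p ∈ [-1,1], then the function q₀(τ) = cos(τ)cos(τηp) − p·sin(τ)sin(τηp) has a zero in (0, π); i.e., its smallest positive zero satisfies τ₀(p) < π. -/
open Real
theorem stmt5 (η p : ℝ) (hη : -1 < η) (hη2 : η < -1/2)
    (hp : |p| < 1/(2*|η|)) (hp2 : p ∈ Set.Icc (-1:ℝ) 1) :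
    ∃ τ ∈ Set.Ioo (0:ℝ) Real.pi, q0 η p τ = 0 := by
  have hcont : ContinuousOn (q0 η p) (Set.Icc 0 Real.pi) := by
    apply Continuous.continuousOn
    unfold q0
    continuity
  have h0 : q0 η p 0 = 1 := by simp [q0]
  have hηp : |η * p| < 1/2 := by
    have hηa : (0:ℝ) < |η| := abs_pos.mpr (by intro h; rw [h] at hη2; norm_num at hη2)
    have h2 : |p| * (2*|η|) < 1 := (lt_div_iff₀ (by positivity)).mp hp
    rw [abs_mul]
    nlinarith [abs_nonneg p]
  have hπ : q0 η p Real.pi < 0 := by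
    have hc : Real.cos (Real.pi * η * p) > 0 := by
      apply Real.cos_pos_of_mem_Ioo
      constructor
      · have := abs_lt.mp hηp
        have hπpos := Real.pi_pos
        rw [mul_assoc]
        nlinarith [this.1, this.2]
      · have := abs_lt.mp hηp
        have hπpos := Real.pi_pos
        rw [mul_assoc]
        nlinarith [this.1, this.2]
    simp [q0, Real.cos_pi, Real.sin_pi]
    linarith
  have hsub : Set.Ioo (q0 η p Real.pi) (q0 η p 0) ⊆ q0 η p '' Set.Ioo 0 Real.pi :=
    intermediate_value_Ioo' Real.pi_pos.le hcont
  have h0mem : (0:ℝ) ∈ Set.Ioo (q0 η p Real.pi) (q0 η p 0) := ⟨hπ, by rw [h0]; norm_num⟩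
  obtain ⟨τ, hτ, hτ0⟩ := hsub h0mem
  exact ⟨τ, hτ, hτ0⟩
end

section
/- If η > 0, then for every p ∈ [-1,1] the function q₀(τ) = cos(τ)cos(τηp) − p·sin(τ)sin(τηp) has a zero in (0, π/2]; i.e., the smallest positive zero τ₀(p) satisfies τ₀(p) ≤ π/2. -/
open Real
theorem stmt7 (η p : ℝ) (hη : η > 0) (hp : p ∈ Set.Icc (-1:ℝ) 1) :
    ∃ τ ∈ Set.Ioc (0:ℝ) (Real.pi/2), q0 η p τ = 0 := by
  obtain ⟨hp1, hp2⟩ := hp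
  have hπ := Real.pi_pos
  set b : ℝ := if η * |p| ≤ 2 then Real.pi/2 else Real.pi/(η*|p|) with hb
  have hb_pos : 0 < b := by
    rw [hb]; split_ifs with h
    · linarith
    · have hpne : p ≠ 0 := by
        intro h0; rw [h0] at h; norm_num at h
      positivity
  have hb_le : b ≤ Real.pi/2 := by
    rw [hb]; split_ifs with h
    · exact le_rfl
    · push_neg at h
      have hpos : (0:ℝ) < η * |p| := by nlinarith
      rw [div_le_div_iff₀ hpos (by norm_num : (0:ℝ) < 2)]
      nlinarith
  have hcont : Continuous (q0 η p) := by
    unfold q0; continuity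
  have hf0 : q0 η p 0 = 1 := by simp [q0]
  have hfb : q0 η p b ≤ 0 := by
    rw [hb]; split_ifs with h
    · -- b = π/2
      have harg : p * Real.sin (Real.pi/2*η*p) = |p| * Real.sin (Real.pi/2*η*|p|) := by
        rcases abs_cases p with ⟨h1, h2⟩ | ⟨h1, h2⟩
        · rw [h1]
        · rw [h1, show Real.pi/2*η*p = -(Real.pi/2*η*(-p)) by ring, Real.sin_neg]; ring
      have hsin : 0 ≤ Real.sin (Real.pi/2*η*|p|) := by
        apply Real.sin_nonneg_of_nonneg_of_le_pi
        · positivity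
        · nlinarith [abs_nonneg p]
      simp only [q0, Real.cos_pi_div_two, Real.sin_pi_div_two, zero_mul, zero_sub]
      rw [mul_one, harg]
      nlinarith [abs_nonneg p]
    · push_neg at h
      have hpne : p ≠ 0 := by
        intro h0; rw [h0] at h; norm_num at h
      have hpabs : 0 < |p| := abs_pos.mpr hpne
      have hpos : (0:ℝ) < η * |p| := by positivity
      have harg : Real.pi/(η*|p|)*η*p = Real.pi * (p / |p|) := by
        field_simp
      have hb2 : 0 < Real.pi/(η*|p|) := by positivity
      have hb3 : Real.pi/(η*|p|) ≤ Real.pi/2 := by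
        rw [div_le_div_iff₀ hpos (by norm_num : (0:ℝ) < 2)]; nlinarith
      have hcos : 0 ≤ Real.cos (Real.pi/(η*|p|)) := by
        apply Real.cos_nonneg_of_mem_Icc
        constructor <;> [linarith; linarith]
      rcases abs_cases p with ⟨h1, h2⟩ | ⟨h1, h2⟩
      · have : p / |p| = 1 := by rw [h1]; field_simp
        simp only [q0, harg, this, mul_one, Real.cos_pi, Real.sin_pi]
        ring_nf at hcos ⊢
        linarith
      · have : p / |p| = -1 := by rw [h1]; field_simp
        simp only [q0, harg, this, mul_neg_one]
        rw [Real.cos_neg, Real.sin_neg, Real.cos_pi, Real.sin_pi]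
        ring_nf at hcos ⊢
        linarith
  have h0mem : (0:ℝ) ∈ Set.Icc (q0 η p b) (q0 η p 0) := ⟨hfb, by rw [hf0]; norm_num⟩
  obtain ⟨τ, hτmem, hτ⟩ := intermediate_value_Icc' hb_pos.le hcont.continuousOn h0mem
  refine ⟨τ, ⟨?_, le_trans hτmem.2 hb_le⟩, hτ⟩
  rcases hτmem.1.lt_or_eq with hlt | heq
  · exact hlt
  · exfalso; rw [← heq, hf0] at hτ; norm_num at hτ
end

section
/- If -1 < η ≤ 0 and p ∈ [-1,1], p ≠ 0, then the smallest positive zero τ₃(p) of q₃(τ) = cos(τ)sin(τηp) + p·sin(τ)cos(τηp) satisfies τ₃(p) ≥ π. -/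
open Real
-- concavity: u * sin v ≤ v * sin u for 0 ≤ u ≤ v ≤ π
lemma sin_concave_bound (u v : ℝ) (hu0 : 0 ≤ u) (huv : u ≤ v) (hvπ : v ≤ π) :
    u * Real.sin v ≤ v * Real.sin u := by
  rcases eq_or_lt_of_le (hu0.trans huv) with hv | hv
  · have hu : u = 0 := le_antisymm (huv.trans hv.symm.le) hu0
    simp [hu, ← hv]
  · set t : ℝ := u / v with htdef
    have ht0 : 0 ≤ t := div_nonneg hu0 hv.le
    have ht1 : t ≤ 1 := (div_le_one hv).2 huv
    have htv : t * v = u := div_mul_cancel₀ u (ne_of_gt hv)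
    have h := strictConcaveOn_sin_Icc.concaveOn.2
      (Set.mem_Icc.2 ⟨le_refl (0:ℝ), Real.pi_pos.le⟩) (Set.mem_Icc.2 ⟨hu0.trans huv, hvπ⟩)
      (by linarith : (0:ℝ) ≤ 1 - t) ht0 (by ring)
    have h' : t * Real.sin v ≤ Real.sin (t * v) := by
      simpa using h
    rw [htv] at h'
    calc u * Real.sin v = v * (t * Real.sin v) := by rw [← htv]; ring
      _ ≤ v * Real.sin u := by
          exact mul_le_mul_of_nonneg_left h' hv.le

lemma key (η p τ : ℝ) (hη : -1 < η) (hη2 : η ≤ 0) (hp1 : 0 < p) (hp2 : p ≤ 1)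
    (ht : 0 < τ) (ht2 : τ < π) : 0 < q3 η p τ := by
  set b : ℝ := -(η*p) with hb
  have hb0 : 0 ≤ b := by nlinarith
  have hbp : b < p := by nlinarith
  have hid : q3 η p τ = ((1+p)/2) * Real.sin (τ - τ*b) - ((1-p)/2) * Real.sin (τ + τ*b) := by
    unfold q3
    rw [Real.sin_sub, Real.sin_add]
    have h1 : τ*η*p = -(τ*b) := by rw [hb]; ring
    rw [h1, Real.sin_neg, Real.cos_neg]
    ring
  have hu0 : 0 < τ - τ*b := by nlinarith
  have huπ : τ - τ*b < π := by nlinarith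
  have hsu : 0 < Real.sin (τ - τ*b) := Real.sin_pos_of_pos_of_lt_pi hu0 huπ
  rcases le_or_gt (Real.sin (τ + τ*b)) 0 with hv | hv
  · nlinarith
  · -- sin v > 0, with 0 < v < 2π forces v < π
    have hv0 : 0 < τ + τ*b := by nlinarith
    have hvπ : τ + τ*b < π := by
      by_contra hc
      push_neg at hc
      have h2 : Real.sin ((τ + τ*b) - π) = -Real.sin (τ + τ*b) := Real.sin_sub_pi _
      have h3 : 0 ≤ Real.sin ((τ + τ*b) - π) :=
        Real.sin_nonneg_of_nonneg_of_le_pi (by linarith) (by nlinarith)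
      linarith
    have hcb2 : (τ - τ*b) * Real.sin (τ + τ*b) ≤ (τ + τ*b) * Real.sin (τ - τ*b) :=
      sin_concave_bound (τ - τ*b) (τ + τ*b) hu0.le (by nlinarith) hvπ.le
    rw [hid]
    have hkey : (1-p) * (τ + τ*b) < (1+p) * (τ - τ*b) := by nlinarith
    nlinarith [mul_lt_mul_of_pos_right hkey hv,
      mul_le_mul_of_nonneg_left hcb2 (by linarith : (0:ℝ) ≤ 1+p), hv0, hsu]

lemma q3_odd (η p τ : ℝ) : q3 η (-p) τ = -q3 η p τ := by
  unfold q3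
  have h : τ*η*(-p) = -(τ*η*p) := by ring
  rw [h, Real.sin_neg, Real.cos_neg]
  ring

lemma q3_ne (η p τ : ℝ) (hη : -1 < η) (hη2 : η ≤ 0)
    (hp : p ∈ Set.Icc (-1:ℝ) 1) (hp0 : p ≠ 0) (ht : 0 < τ) (ht2 : τ < π) :
    q3 η p τ ≠ 0 := by
  obtain ⟨hp1, hp2⟩ := hp
  rcases lt_or_gt_of_ne hp0 with hneg | hpos
  · have h := key η (-p) τ hη hη2 (by linarith) (by linarith) ht ht2
    rw [q3_odd] at h
    linarith
  · exact ne_of_gt (key η p τ hη hη2 hpos hp2 ht ht2)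

theorem stmt9 (η p τ₃ : ℝ) (hη : -1 < η) (hη2 : η ≤ 0)
    (hp : p ∈ Set.Icc (-1:ℝ) 1) (hp0 : p ≠ 0)
    (h : IsLeast {τ : ℝ | 0 < τ ∧ q3 η p τ = 0} τ₃) :
    Real.pi ≤ τ₃ := by
  obtain ⟨⟨ht, hq⟩, _⟩ := h
  by_contra hc
  push_neg at hc
  exact q3_ne η p τ₃ hη hη2 hp hp0 ht hc hq
end

section
/- Let η > 0 and let τ_c ∈ (π/2, π) satisfy sin(τ_c) = −τ_c η cos(τ_c). Then the Hessian of the function q₃(p, τ) = cos(τ)sin(τηp) + p·sin(τ)cos(τηp) at the point (p, τ) = (0, τ_c) equals [[0, A],[A, 0]] with A = (1 + η + τ_c² η²)·cos(τ_c) ≠ 0; in particular (0, τ_c) is a nondegenerate saddle point of q₃. -/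
open Real
lemma lin_deriv (c p : ℝ) : HasDerivAt (fun x : ℝ => c * x) c p := by
  simpa using (hasDerivAt_id p).const_mul c

lemma hasDerivAt_q3p (η τ p : ℝ) :
    HasDerivAt (fun p' => q3 η p' τ)
      (Real.cos τ * (Real.cos (τ*η*p) * (τ*η)) +
        (Real.sin τ * Real.cos (τ*η*p) + p * Real.sin τ * (-Real.sin (τ*η*p) * (τ*η)))) p := by
  have hlin : HasDerivAt (fun p' : ℝ => τ*η*p') (τ*η) p := lin_deriv _ _
  have hsin : HasDerivAt (fun p' : ℝ => Real.sin (τ*η*p')) (Real.cos (τ*η*p) * (τ*η)) p :=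
    (Real.hasDerivAt_sin _).comp p hlin
  have hcos : HasDerivAt (fun p' : ℝ => Real.cos (τ*η*p')) (-Real.sin (τ*η*p) * (τ*η)) p :=
    (Real.hasDerivAt_cos _).comp p hlin
  have h1 := hsin.const_mul (Real.cos τ)
  have h2 := ((hasDerivAt_id p).mul_const (Real.sin τ)).mul hcos
  have := h1.add h2
  simpa [q3, Pi.add_def, Pi.mul_def, mul_comm, mul_assoc, mul_left_comm, add_comm] using this

theorem stmt14 (η τc : ℝ) (hη : η > 0) (hτc : τc ∈ Set.Ioo (Real.pi/2) Real.pi)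
    (hconj : Real.sin τc = -τc * η * Real.cos τc) :
    deriv (fun p => deriv (fun p' => q3 η p' τc) p) 0 = 0 ∧
    deriv (fun τ => deriv (fun τ' => q3 η 0 τ') τ) τc = 0 ∧
    deriv (fun τ => deriv (fun p => q3 η p τ) 0) τc = (1 + η + τc^2 * η^2) * Real.cos τc ∧
    (1 + η + τc^2 * η^2) * Real.cos τc ≠ 0 := by
  have hcosneg : Real.cos τc < 0 :=
    Real.cos_neg_of_pi_div_two_lt_of_lt hτc.1 (by linarith [hτc.2, Real.pi_pos])
  refine ⟨?_, ?_, ?_, ?_⟩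
  · -- ∂²/∂p² at 0
    have heq : (fun p => deriv (fun p' => q3 η p' τc) p) =
        (fun p => Real.cos τc * (Real.cos (τc*η*p) * (τc*η)) +
          (Real.sin τc * Real.cos (τc*η*p) + p * Real.sin τc * (-Real.sin (τc*η*p) * (τc*η)))) :=
      funext fun p => (hasDerivAt_q3p η τc p).deriv
    rw [heq]
    have hlin : HasDerivAt (fun p : ℝ => τc*η*p) (τc*η) 0 := lin_deriv _ _
    have hsin : HasDerivAt (fun p : ℝ => Real.sin (τc*η*p)) (Real.cos (τc*η*0) * (τc*η)) 0 :=
      (Real.hasDerivAt_sin _).comp 0 hlin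
    have hcos : HasDerivAt (fun p : ℝ => Real.cos (τc*η*p)) (-Real.sin (τc*η*0) * (τc*η)) 0 :=
      (Real.hasDerivAt_cos _).comp 0 hlin
    have h1 := (hcos.mul_const (τc*η)).const_mul (Real.cos τc)
    have h2 := hcos.const_mul (Real.sin τc)
    have h3 := ((hasDerivAt_id (0:ℝ)).mul_const (Real.sin τc)).mul
      ((hsin.neg).mul_const (τc*η))
    have htot := h1.add (h2.add h3)
    have : deriv (fun p => Real.cos τc * (Real.cos (τc*η*p) * (τc*η)) +
          (Real.sin τc * Real.cos (τc*η*p) + p * Real.sin τc * (-Real.sin (τc*η*p) * (τc*η)))) 0 =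
        _ := htot.deriv
    rw [this]
    simp
  · -- q3 η 0 τ' = 0
    have : (fun τ' => q3 η 0 τ') = fun _ : ℝ => (0:ℝ) := by
      funext τ'; simp [q3]
    rw [this]
    simp
  · -- mixed partial
    have heq : (fun τ => deriv (fun p => q3 η p τ) 0) =
        (fun τ => Real.cos τ * (τ*η) + Real.sin τ) := by
      funext τ
      rw [(hasDerivAt_q3p η τ 0).deriv]
      simp
    rw [heq]
    have h1 := (Real.hasDerivAt_cos τc).mul ((hasDerivAt_id τc).mul_const η)
    have h2 := Real.hasDerivAt_sin τc
    have htot := h1.add h2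
    simp only [id_eq] at htot
    rw [show deriv (fun τ => Real.cos τ * (τ * η) + Real.sin τ) τc = _ from htot.deriv, hconj]
    ring
  · have hpos : 0 < 1 + η + τc^2 * η^2 := by positivity
    exact mul_ne_zero (ne_of_gt hpos) (ne_of_lt hcosneg)
end
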